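/- For 0 < r < n, the minimal matroid T_{r,n} is a connected matroid. -/

import Mathlib

open Matroid

/-- `M` decomposes as the direct sum of its restrictions to `A` and `B`, where `A, B` is a
partition of the ground set into two nonempty parts: a set is independent iff its
intersections with `A` and with `B` are both independent. -/
def IsDirectSumDecomp (M : Matroid ℕ) (A B : Set ℕ) : Prop :=
  A.Nonempty ∧ B.Nonempty ∧ Disjoint A B ∧ A ∪ B = M.E ∧
    ∀ I ⊆ M.E, (M.Indep I ↔ M.Indep (I ∩ A) ∧ M.Indep (I ∩ B))

lemma encard_Icc_one (m : ℕ) : (Set.Icc 1 m).encard = m := by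
  rw [← Finset.coe_Icc, Set.encard_coe_eq_coe_finsetCard, Nat.card_Icc]
  simp

/-- Independence characterization for the minimal matroid. -/
lemma minimal_indep_char (n r : ℕ) (_hr : 0 < r) (hrn : r < n)
    (M : Matroid ℕ)
    (hbase : ∀ B : Set ℕ, M.IsBase B ↔
      B ⊆ Set.Icc 1 n ∧ B.encard = r ∧ (B ∩ Set.Ioc r n).encard ≤ 1) (I : Set ℕ) :
    M.Indep I ↔ I ⊆ Set.Icc 1 n ∧ I.encard ≤ r ∧ (I ∩ Set.Ioc r n).encard ≤ 1 := by
  constructor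
  · rintro hI
    obtain ⟨B, hB, hIB⟩ := hI.exists_isBase_superset
    obtain ⟨hBs, hBc, hBi⟩ := (hbase B).1 hB
    refine ⟨hIB.trans hBs, ?_, ?_⟩
    · exact hBc ▸ Set.encard_mono hIB
    · exact le_trans (Set.encard_mono (Set.inter_subset_inter_left _ hIB)) hBi
  · rintro ⟨hIs, hIc, hIi⟩
    -- extend I to a base by adding elements of Icc 1 r \ I
    have hdiff : (r : ℕ∞) - I.encard ≤ (Set.Icc 1 r \ I).encard := by
      have h1 : (Set.Icc 1 r).encard ≤ (Set.Icc 1 r \ I).encard + I.encard := by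
        refine le_trans (Set.encard_mono ?_) (Set.encard_union_le _ _)
        intro x hx
        by_cases hxI : x ∈ I
        · exact Or.inr hxI
        · exact Or.inl ⟨hx, hxI⟩
      rw [encard_Icc_one] at h1
      exact tsub_le_iff_right.2 h1
    obtain ⟨S, hSsub, hScard⟩ := Set.exists_subset_encard_eq hdiff
    have hSdisj : Disjoint I S := by
      refine Set.disjoint_left.2 fun x hxI hxS => ?_
      exact (hSsub hxS).2 hxI
    have hSr : S ⊆ Set.Icc 1 r := fun x hx => (hSsub hx).1
    have hB : M.IsBase (I ∪ S) := by
      rw [hbase]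
      refine ⟨?_, ?_, ?_⟩
      · refine Set.union_subset hIs (hSr.trans ?_)
        exact Set.Icc_subset_Icc_right hrn.le
      · rw [Set.encard_union_eq hSdisj, hScard, add_tsub_cancel_of_le hIc]
      · have : (I ∪ S) ∩ Set.Ioc r n = I ∩ Set.Ioc r n := by
          rw [Set.union_inter_distrib_right]
          have : S ∩ Set.Ioc r n = ∅ := by
            ext x
            simp only [Set.mem_inter_iff, Set.mem_empty_iff_false, iff_false, not_and]
            intro hxS hxI
            exact absurd (hSr hxS).2 (not_le.2 hxI.1)
          rw [this, Set.union_empty]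
        rw [this]
        exact hIi
    exact hB.indep.subset Set.subset_union_left

/-- Auxiliary: if `n ∈ A` for a direct sum decomposition, contradiction. -/
lemma minimal_aux (n r : ℕ) (hr : 0 < r) (hrn : r < n)
    (M : Matroid ℕ) (hE : M.E = Set.Icc 1 n)
    (hbase : ∀ B : Set ℕ, M.IsBase B ↔
      B ⊆ Set.Icc 1 n ∧ B.encard = r ∧ (B ∩ Set.Ioc r n).encard ≤ 1)
    (A B : Set ℕ) (hdec : IsDirectSumDecomp M A B) (hnA : n ∈ A) : False := by
  obtain ⟨hAne, ⟨b, hbB⟩, hdisj, hunion, hiff⟩ := hdec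
  have ichar := minimal_indep_char n r hr hrn M hbase
  have hbE : b ∈ Set.Icc 1 n := by
    rw [← hE, ← hunion]; exact Or.inr hbB
  have hbA : b ∉ A := fun h => Set.disjoint_left.1 hdisj h hbB
  have hnB : n ∉ B := fun h => Set.disjoint_left.1 hdisj hnA h
  have hbn : b ≠ n := fun h => hbA (h ▸ hnA)
  have hnIcc : n ∈ Set.Icc 1 n := ⟨hr.trans_le hrn.le, le_refl n⟩
  by_cases hbr : r < b
  · -- both b and n exceed r: {n, b} is dependent, but both parts are independent
    set D : Set ℕ := {n, b} with hD
    have hDE : D ⊆ M.E := by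
      rw [hE]
      intro x hx
      simp only [hD, Set.mem_insert_iff, Set.mem_singleton_iff] at hx
      rcases hx with hx | hx
      · rw [hx]; exact hnIcc
      · rw [hx]; exact hbE
    have hDA : D ∩ A = {n} := by
      ext x
      simp only [hD, Set.mem_inter_iff, Set.mem_insert_iff, Set.mem_singleton_iff]
      constructor
      · rintro ⟨rfl | rfl, hx⟩
        · rfl
        · exact absurd hx hbA
      · rintro rfl; exact ⟨Or.inl rfl, hnA⟩
    have hDB : D ∩ B = {b} := by
      ext x
      simp only [hD, Set.mem_inter_iff, Set.mem_insert_iff, Set.mem_singleton_iff]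
      constructor
      · rintro ⟨rfl | rfl, hx⟩
        · exact absurd hx hnB
        · rfl
      · rintro rfl; exact ⟨Or.inr rfl, hbB⟩
    have hsingn : M.Indep {n} := by
      rw [ichar]
      refine ⟨Set.singleton_subset_iff.2 hnIcc, ?_, ?_⟩
      · rw [Set.encard_singleton]; exact_mod_cast hr
      · exact le_trans (Set.encard_mono Set.inter_subset_left) (by simp)
    have hsingb : M.Indep {b} := by
      rw [ichar]
      refine ⟨Set.singleton_subset_iff.2 hbE, ?_, ?_⟩
      · rw [Set.encard_singleton]; exact_mod_cast hr
      · exact le_trans (Set.encard_mono Set.inter_subset_left) (by simp)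
    have hDindep : M.Indep D := by
      rw [hiff D hDE, hDA, hDB]; exact ⟨hsingn, hsingb⟩
    rw [ichar] at hDindep
    have h2 : D ∩ Set.Ioc r n = D := by
      rw [Set.inter_eq_left]
      intro x hx
      simp only [hD, Set.mem_insert_iff, Set.mem_singleton_iff] at hx
      rcases hx with hx | hx
      · rw [hx]; exact ⟨hrn, le_refl n⟩
      · rw [hx]; exact ⟨hbr, hbE.2⟩
    have := hDindep.2.2
    rw [h2] at this
    have hDcard : D.encard = 2 := Set.encard_pair hbn.symm
    rw [hDcard] at this
    norm_num at this
  · -- b ≤ r : use D = Icc 1 r ∪ {n}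
    push_neg at hbr
    set D : Set ℕ := Set.Icc 1 r ∪ {n} with hD
    have hIccsub : Set.Icc 1 r ⊆ Set.Icc 1 n := Set.Icc_subset_Icc_right hrn.le
    have hDE : D ⊆ M.E := by
      rw [hE]
      exact Set.union_subset hIccsub (Set.singleton_subset_iff.2 hnIcc)
    have hnIr : n ∉ Set.Icc 1 r := fun h => absurd h.2 (not_le.2 hrn)
    have hbIr : b ∈ Set.Icc 1 r := ⟨hbE.1, hbr⟩
    have hDcard : D.encard = r + 1 := by
      rw [hD, Set.encard_union_eq (by simpa using hnIr), encard_Icc_one,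
        Set.encard_singleton]
    -- D is dependent
    have hDdep : ¬ M.Indep D := by
      rw [ichar]
      rintro ⟨-, hc, -⟩
      rw [hDcard] at hc
      norm_cast at hc
      omega
    -- D ∩ A is independent
    have hIoc_inter : Set.Icc 1 r ∩ Set.Ioc r n = ∅ := by
      ext x
      simp only [Set.mem_inter_iff, Set.mem_Icc, Set.mem_Ioc, Set.mem_empty_iff_false,
        iff_false, not_and]
      omega
    have hDAindep : M.Indep (D ∩ A) := by
      rw [ichar]
      refine ⟨Set.inter_subset_left.trans (Set.union_subset hIccsub (Set.singleton_subset_iff.2 hnIcc)), ?_, ?_⟩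
      · have hsub : D ∩ A ⊆ (Set.Icc 1 r \ {b}) ∪ {n} := by
          rintro x ⟨hxD, hxA⟩
          rcases hxD with hx | hx
          · refine Or.inl ⟨hx, ?_⟩
            simp only [Set.mem_singleton_iff]
            rintro rfl
            exact hbA hxA
          · exact Or.inr hx
        refine le_trans (Set.encard_mono hsub) ?_
        refine le_trans (Set.encard_union_le _ _) ?_
        rw [Set.encard_diff_singleton_of_mem hbIr, encard_Icc_one, Set.encard_singleton]
        have hr1 : (1 : ℕ∞) ≤ r := by exact_mod_cast hr
        rw [tsub_add_cancel_of_le hr1]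
      · refine le_trans (Set.encard_mono ?_) (Set.encard_singleton n).le
        rintro x ⟨⟨hxD, -⟩, hxIoc⟩
        rcases hxD with hx | hx
        · exact absurd (Set.mem_inter hx hxIoc) (by rw [hIoc_inter]; exact id)
        · exact hx
    -- D ∩ B is independent
    have hDBindep : M.Indep (D ∩ B) := by
      rw [ichar]
      have hsub : D ∩ B ⊆ Set.Icc 1 r := by
        rintro x ⟨hxD, hxB⟩
        rcases hxD with hx | hx
        · exact hx
        · rw [Set.mem_singleton_iff] at hx
          exact absurd (hx ▸ hxB) hnB
      refine ⟨hsub.trans hIccsub, ?_, ?_⟩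
      · exact le_trans (Set.encard_mono hsub) (encard_Icc_one r).le
      · refine le_trans (Set.encard_mono ?_) (by simp : (∅ : Set ℕ).encard ≤ 1)
        rintro x ⟨hx1, hx2⟩
        rw [← hIoc_inter]
        exact ⟨hsub hx1, hx2⟩
    exact hDdep ((hiff D hDE).2 ⟨hDAindep, hDBindep⟩)

/-- For `0 < r < n`, the minimal matroid `T_{r,n}` (the rank-`r` matroid on `{1,…,n}` whose
bases are the `r`-subsets with at most one element in `{r+1,…,n}`, i.e. `U_{r,r+1}` with
`n-r-1` parallel elements added) is connected: it is not a direct sum of two matroids on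
nonempty ground sets. -/
theorem minimal_matroid_connected (n r : ℕ) (hr : 0 < r) (hrn : r < n)
    (M : Matroid ℕ) (hE : M.E = Set.Icc 1 n)
    (hbase : ∀ B : Set ℕ, M.IsBase B ↔
      B ⊆ Set.Icc 1 n ∧ B.encard = r ∧ (B ∩ Set.Ioc r n).encard ≤ 1) :
    ¬ ∃ A B, IsDirectSumDecomp M A B := by
  rintro ⟨A, B, hdec⟩
  have hnE : n ∈ M.E := by
    rw [hE]; exact ⟨hr.trans_le hrn.le, le_refl n⟩
  have hnAB : n ∈ A ∪ B := by rw [hdec.2.2.2.1]; exact hnE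
  rcases hnAB with hnA | hnB
  · exact minimal_aux n r hr hrn M hE hbase A B hdec hnA
  · refine minimal_aux n r hr hrn M hE hbase B A ?_ hnB
    obtain ⟨h1, h2, h3, h4, h5⟩ := hdec
    exact ⟨h2, h1, h3.symm, by rwa [Set.union_comm], fun I hI => by rw [h5 I hI, and_comm]⟩
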